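/- For every r ∈ [0,1], the function Φ_{r,0}(x) = x/((2-r) + rx) is a fixed point of the renormalisation operator R_r defined by (R_r Ψ)(x) = α·Ψ(Ψ(x/β)) with α = 3-r and β = (3-r)/(2-r); that is, α·Φ_{r,0}(Φ_{r,0}(x/β)) = Φ_{r,0}(x) for all x ≥ 0. Moreover Φ_{r,0}(0) = 0 and Φ_{r,0}'(0) = 1/(2-r). -/

import Mathlib

theorem stmt_5 (r : ℝ) (hr : r ∈ Set.Icc (0:ℝ) 1) :
    (∀ x : ℝ, 0 ≤ x →
      (3 - r) * (fun y => y / ((2 - r) + r * y))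
        ((fun y => y / ((2 - r) + r * y)) (x / ((3 - r) / (2 - r))))
        = x / ((2 - r) + r * x)) ∧
    (0:ℝ) / ((2 - r) + r * 0) = 0 ∧
    HasDerivAt (fun y => y / ((2 - r) + r * y)) (1 / (2 - r)) 0 := by
  obtain ⟨hr0, hr1⟩ := hr
  have hρ : (0:ℝ) < 2 - r := by linarith
  have hα : (0:ℝ) < 3 - r := by linarith
  refine ⟨?_, by simp, ?_⟩
  · intro x hx
    simp only
    have h1 : (0:ℝ) < (2 - r) + r * x := by nlinarith
    have h2 : (0:ℝ) < (2 - r) + r * (x / ((3 - r) / (2 - r))) := by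
      have : 0 ≤ r * (x / ((3 - r) / (2 - r))) := by positivity
      linarith
    have h3 : (0:ℝ) < (2 - r) + r * (x / ((3 - r) / (2 - r)) /
        ((2 - r) + r * (x / ((3 - r) / (2 - r))))) := by
      have : 0 ≤ r * (x / ((3 - r) / (2 - r)) /
        ((2 - r) + r * (x / ((3 - r) / (2 - r))))) := by positivity
      linarith
    field_simp
    ring
  · have hd : HasDerivAt (fun y : ℝ => (2 - r) + r * y) r 0 := by
      simpa using ((hasDerivAt_id (0:ℝ)).const_mul r).const_add (2 - r)
    have := (hasDerivAt_id (0:ℝ)).div hd (by simpa using hρ.ne')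
    convert this using 1
    · rfl
    · rfl
    · rfl
    · simp; field_simp
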